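/- Let G be a finite group acting on a finite type X, and let H be a subgroup of G. Then the number of elements x ∈ X whose stabilizer in G equals H is [N_G(H) : H] times the number of orbits of the action that contain at least one point whose stabilizer equals H, where N_G(H) is the normalizer of H in G. -/

import Mathlib

open MulAction

lemma aux_conj_mem_normalizer {G : Type*} [Group G] (H : Subgroup G) (g : G) :
    H.map (MulAut.conj g).toMonoidHom = H ↔ g ∈ (Subgroup.normalizer (H : Set G)) := by
  rw [Subgroup.mem_normalizer_iff'']
  have key : ∀ x, x ∈ H.map (MulAut.conj g).toMonoidHom ↔ g⁻¹ * x * g ∈ H := by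
    intro x
    rw [Subgroup.mem_map_equiv]
    simp [mul_assoc]
  constructor
  · intro h x
    rw [← key, h]
  · intro h
    ext x
    rw [key]
    exact (h x).symm

lemma aux_fiber_card {G : Type*} [Group G] [Finite G] {X : Type*} [Finite X]
    [MulAction G X] (H : Subgroup G) (x0 : X) (h0 : stabilizer G x0 = H) :
    Nat.card {y : X // Quotient.mk (orbitRel G X) y = Quotient.mk (orbitRel G X) x0 ∧
        stabilizer G y = H} = (H.subgroupOf (Subgroup.normalizer (H : Set G))).index := by
  have hset : {y : X | Quotient.mk (orbitRel G X) y = Quotient.mk (orbitRel G X) x0 ∧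
      stabilizer G y = H} = orbit (Subgroup.normalizer (H : Set G)) x0 := by
    ext y
    simp only [Set.mem_setOf_eq, Quotient.eq'', orbitRel_apply, mem_orbit_iff]
    constructor
    · rintro ⟨⟨g, rfl⟩, hstab⟩
      rw [stabilizer_smul_eq_stabilizer_map_conj, h0, aux_conj_mem_normalizer] at hstab
      exact ⟨⟨g, hstab⟩, rfl⟩
    · rintro ⟨⟨g, hg⟩, rfl⟩
      refine ⟨⟨g, rfl⟩, ?_⟩
      rw [Subgroup.mk_smul, stabilizer_smul_eq_stabilizer_map_conj, h0,
        aux_conj_mem_normalizer]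
      exact hg
  have e1 : {y : X // Quotient.mk (orbitRel G X) y = Quotient.mk (orbitRel G X) x0 ∧
      stabilizer G y = H} ≃ orbit (Subgroup.normalizer (H : Set G)) x0 := Equiv.setCongr hset
  have hstabN : stabilizer (Subgroup.normalizer (H : Set G)) x0 = H.subgroupOf (Subgroup.normalizer (H : Set G)) := by
    ext n
    simp [mem_stabilizer_iff, Subgroup.mem_subgroupOf, ← h0, Subgroup.smul_def]
  have e2 : orbit (Subgroup.normalizer (H : Set G)) x0 ≃ (Subgroup.normalizer (H : Set G)) ⧸ stabilizer (Subgroup.normalizer (H : Set G)) x0 :=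
    orbitEquivQuotientStabilizer (Subgroup.normalizer (H : Set G)) x0
  rw [Nat.card_congr (e1.trans e2), hstabN, Subgroup.index]

theorem statement13 (G : Type*) [Group G] [Finite G] (X : Type*) [Finite X]
    [MulAction G X] (H : Subgroup G) :
    { x : X | MulAction.stabilizer G x = H }.ncard =
      (H.subgroupOf (Subgroup.normalizer (H : Set G))).index *
        { q : Quotient (MulAction.orbitRel G X) |
            ∃ x : X, Quotient.mk (MulAction.orbitRel G X) x = q ∧
              MulAction.stabilizer G x = H }.ncard := by
  classical
  have := Fintype.ofFinite X
  set Q := Quotient (orbitRel G X)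
  have := Fintype.ofFinite Q
  -- sigma decomposition
  have hsig : {x : X // stabilizer G x = H} ≃
      Σ q : Q, {y : X // Quotient.mk (orbitRel G X) y = q ∧ stabilizer G y = H} := by
    refine (Equiv.sigmaFiberEquiv
      (fun x : {x : X // stabilizer G x = H} => Quotient.mk (orbitRel G X) x.1)).symm.trans ?_
    refine Equiv.sigmaCongrRight fun q => ?_
    exact { toFun := fun x => ⟨x.1.1, x.2, x.1.2⟩,
            invFun := fun y => ⟨⟨y.1, y.2.2⟩, y.2.1⟩,
            left_inv := fun _ => rfl, right_inv := fun _ => rfl }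
  have hsig' : ↑{ x : X | stabilizer G x = H } ≃
      Σ q : Q, {y : X // Quotient.mk (orbitRel G X) y = q ∧ stabilizer G y = H} :=
    (Equiv.subtypeEquivRight fun x => Iff.rfl).trans hsig
  rw [← Nat.card_coe_set_eq, Nat.card_congr hsig', Nat.card_eq_fintype_card,
    Fintype.card_sigma]
  simp only [← Nat.card_eq_fintype_card]
  have hfib : ∀ q : Q,
      Nat.card {y : X // Quotient.mk (orbitRel G X) y = q ∧ stabilizer G y = H} =
        if ∃ x : X, Quotient.mk (orbitRel G X) x = q ∧ stabilizer G x = H then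
          (H.subgroupOf (Subgroup.normalizer (H : Set G))).index else 0 := by
    intro q
    split_ifs with h
    · obtain ⟨x0, hx0, hs0⟩ := h
      subst hx0
      exact aux_fiber_card H x0 hs0
    · rw [Nat.card_eq_zero]
      left
      constructor
      rintro ⟨y, hy⟩
      exact h ⟨y, hy⟩
  calc ∑ q : Q, Nat.card {y : X // Quotient.mk (orbitRel G X) y = q ∧ stabilizer G y = H}
      = ∑ q : Q, if ∃ x : X, Quotient.mk (orbitRel G X) x = q ∧ stabilizer G x = H then
          (H.subgroupOf (Subgroup.normalizer (H : Set G))).index else 0 := by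
        exact Finset.sum_congr rfl fun q _ => hfib q
    _ = (H.subgroupOf (Subgroup.normalizer (H : Set G))).index *
        { q : Q | ∃ x : X, Quotient.mk (orbitRel G X) x = q ∧
            stabilizer G x = H }.ncard := by
        rw [Finset.sum_ite, Finset.sum_const, Finset.sum_const_zero, add_zero,
          smul_eq_mul, Set.ncard_eq_toFinset_card', Set.toFinset_setOf, mul_comm]
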